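/- Let n ≥ 1, r_U > 0, U = B(0, r_U) the open ball in ℝⁿ centered at the origin, and let 𝒱 satisfy 0 < 𝒱 < vol_n(U). Then the infimum of W₂(P_U, P_W) over all measurable sets W ⊆ ℝⁿ with vol_n(W) = 𝒱 equals 0, and this infimum is not attained: W₂(P_U, P_W) > 0 for every measurable W ⊆ ℝⁿ with vol_n(W) = 𝒱. -/

import Mathlib

open MeasureTheory Metric Set
open scoped ENNReal NNReal

noncomputable section

/-- The uniform probability measure on a set `S ⊆ ℝⁿ`: Lebesgue measure restricted to `S`
and normalized. -/
def unif {n : ℕ} (S : Set (EuclideanSpace ℝ (Fin n))) : Measure (EuclideanSpace ℝ (Fin n)) :=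
  (volume S)⁻¹ • volume.restrict S

/-- The set of couplings of two measures `μ, ν` on `ℝⁿ`: measures on the product whose
marginals are `μ` and `ν`. -/
def couplings {n : ℕ} (μ ν : Measure (EuclideanSpace ℝ (Fin n))) :
    Set (Measure (EuclideanSpace ℝ (Fin n) × EuclideanSpace ℝ (Fin n))) :=
  {γ | γ.map Prod.fst = μ ∧ γ.map Prod.snd = ν}

/-- The `L²`-Wasserstein distance between two measures on `ℝⁿ` (valued in `ℝ≥0∞`):
the infimum over all couplings `γ` of `(∫ ‖a − b‖² dγ(a, b))^{1/2}`. -/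
def W2 {n : ℕ} (μ ν : Measure (EuclideanSpace ℝ (Fin n))) : ℝ≥0∞ :=
  ⨅ γ ∈ couplings μ ν, (∫⁻ w, edist w.1 w.2 ^ 2 ∂γ) ^ (1 / 2 : ℝ)

namespace W2aux

variable {n : ℕ}

/-- center of the grid cube containing `x`, grid size `s`. -/
def ctr (s : ℝ) (x : EuclideanSpace ℝ (Fin n)) : EuclideanSpace ℝ (Fin n) :=
  WithLp.toLp 2 (fun i => s * (⌊x i / s⌋ + 1/2))

/-- the piecewise homothety with ratio `l` toward cube centers. -/
def Tm (s l : ℝ) (x : EuclideanSpace ℝ (Fin n)) : EuclideanSpace ℝ (Fin n) :=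
  ctr s x + l • (x - ctr s x)

def cube (s : ℝ) (k : Fin n → ℤ) : Set (EuclideanSpace ℝ (Fin n)) :=
  {x | ∀ i, ⌊x i / s⌋ = k i}

def ctrk (s : ℝ) (k : Fin n → ℤ) : EuclideanSpace ℝ (Fin n) :=
  WithLp.toLp 2 (fun i => s * (k i + 1/2))

lemma measurable_ctr (s : ℝ) : Measurable (ctr s : EuclideanSpace ℝ (Fin n) → _) := by
  refine (PiLp.continuous_toLp 2 _).measurable.comp (measurable_pi_lambda _ ?_)
  intro i
  have h : Measurable (fun x : EuclideanSpace ℝ (Fin n) => x i) :=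
    (measurable_pi_apply i).comp (PiLp.continuous_ofLp 2 _).measurable
  measurability

lemma measurable_Tm (s l : ℝ) : Measurable (Tm s l : EuclideanSpace ℝ (Fin n) → _) := by
  have h1 := measurable_ctr (n := n) s
  exact h1.add ((measurable_id.sub h1).const_smul l)

lemma mem_cube_self (s : ℝ) (x : EuclideanSpace ℝ (Fin n)) :
    x ∈ cube s (fun i => ⌊x i / s⌋) := fun _ => rfl

lemma cube_meas (s : ℝ) (k : Fin n → ℤ) : MeasurableSet (cube s k) := by
  have : cube s k = ⋂ i, {x : EuclideanSpace ℝ (Fin n) | ⌊x i / s⌋ = k i} := by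
    ext x; simp [cube, Set.mem_iInter]
  rw [this]
  refine MeasurableSet.iInter fun i => ?_
  have h : Measurable (fun x : EuclideanSpace ℝ (Fin n) => ⌊x i / s⌋) := by
    have h0 : Measurable (fun x : EuclideanSpace ℝ (Fin n) => x i) :=
      (measurable_pi_apply i).comp (PiLp.continuous_ofLp 2 _).measurable
    exact (h0.div_const s).floor
  exact h (measurableSet_singleton (k i))

lemma cube_disj (s : ℝ) : Pairwise (Function.onFun Disjoint (cube s (n := n))) := by
  intro k k' hkk'
  refine Set.disjoint_left.2 fun x hx hx' => hkk' ?_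
  funext i
  rw [← hx i, ← hx' i]

lemma ctr_eq_on_cube {s : ℝ} {k : Fin n → ℤ} {x : EuclideanSpace ℝ (Fin n)}
    (hx : x ∈ cube s k) : ctr s x = ctrk s k := by
  ext i
  simp [ctr, ctrk, hx i]

lemma Tm_eq_on_cube {s l : ℝ} {k : Fin n → ℤ} {x : EuclideanSpace ℝ (Fin n)}
    (hx : x ∈ cube s k) : Tm s l x = AffineMap.homothety (ctrk s k) l x := by
  rw [AffineMap.homothety_apply, vsub_eq_sub, vadd_eq_add, Tm, ctr_eq_on_cube hx]
  abel

lemma coord_bounds {s : ℝ} (hs : 0 < s) {k : Fin n → ℤ} {x : EuclideanSpace ℝ (Fin n)}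
    (hx : x ∈ cube s k) (i : Fin n) :
    (k i : ℝ) * s ≤ x i ∧ x i < ((k i : ℝ) + 1) * s := by
  have h := hx i
  have h2 : (k i : ℝ) ≤ x i / s ∧ x i / s < k i + 1 := by
    constructor
    · rw [← h]; exact Int.floor_le _
    · rw [← h]; exact Int.lt_floor_add_one _
  constructor
  · calc (k i : ℝ) * s ≤ (x i / s) * s := by nlinarith [h2.1]
      _ = x i := by field_simp
  · calc x i = (x i / s) * s := by field_simp
      _ < ((k i : ℝ) + 1) * s := by nlinarith [h2.2]

lemma Tm_mem_cube {s l : ℝ} (hs : 0 < s) (hl : 0 < l) (hl1 : l ≤ 1)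
    {k : Fin n → ℤ} {x : EuclideanSpace ℝ (Fin n)} (hx : x ∈ cube s k) :
    Tm s l x ∈ cube s k := by
  intro i
  have hb := coord_bounds hs hx i
  have hTi : Tm s l x i = s * ((k i : ℝ) + 1/2) + l * (x i - s * ((k i : ℝ) + 1/2)) := by
    rw [Tm_eq_on_cube hx, AffineMap.homothety_apply, vsub_eq_sub, vadd_eq_add]
    have : (l • (x - ctrk s k) + ctrk s k) i = l * (x i - ctrk s k i) + ctrk s k i := rfl
    rw [this]
    simp only [ctrk]
    ring
  rw [hTi]
  rw [Int.floor_eq_iff]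
  constructor
  · rw [le_div_iff₀ hs]
    nlinarith [hb.1, hb.2]
  · rw [div_lt_iff₀ hs]
    push_cast
    nlinarith [hb.1, hb.2]

/-- homothety as a homeomorphism, to get measurable images. -/
lemma homothety_image_meas {c : EuclideanSpace ℝ (Fin n)} {l : ℝ} (hl : l ≠ 0)
    {A : Set (EuclideanSpace ℝ (Fin n))} (hA : MeasurableSet A) :
    MeasurableSet (AffineMap.homothety c l '' A) := by
  have h : AffineMap.homothety c l ''
      A = (fun y : EuclideanSpace ℝ (Fin n) => c + l⁻¹ • (y - c)) ⁻¹' A := by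
    ext y
    simp only [Set.mem_image, Set.mem_preimage]
    constructor
    · rintro ⟨x, hx, rfl⟩
      rw [AffineMap.homothety_apply, vsub_eq_sub, vadd_eq_add]
      have : c + l⁻¹ • (l • (x - c) + c - c) = x := by
        rw [add_sub_cancel_right, smul_smul, inv_mul_cancel₀ hl, one_smul]
        abel
      rwa [this]
    · intro hy
      refine ⟨c + l⁻¹ • (y - c), hy, ?_⟩
      rw [AffineMap.homothety_apply, vsub_eq_sub, vadd_eq_add, add_sub_cancel_left,
        smul_smul, mul_inv_cancel₀ hl, one_smul]
      abel
  rw [h]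
  exact (measurable_const.add ((measurable_id.sub measurable_const).const_smul (l⁻¹ : ℝ))) hA

lemma Tm_image_eq {s l : ℝ} (A : Set (EuclideanSpace ℝ (Fin n))) :
    Tm s l '' A = ⋃ k : Fin n → ℤ, AffineMap.homothety (ctrk s k) l '' (A ∩ cube s k) := by
  ext y
  simp only [Set.mem_iUnion, Set.mem_image]
  constructor
  · rintro ⟨x, hxA, rfl⟩
    exact ⟨fun i => ⌊x i / s⌋, x, ⟨hxA, mem_cube_self s x⟩, (Tm_eq_on_cube (mem_cube_self s x)).symm⟩
  · rintro ⟨k, x, ⟨hxA, hxk⟩, rfl⟩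
    exact ⟨x, hxA, Tm_eq_on_cube hxk⟩

lemma meas_Tm_image {s l : ℝ} (hl : l ≠ 0) {A : Set (EuclideanSpace ℝ (Fin n))}
    (hA : MeasurableSet A) : MeasurableSet (Tm s l '' A) := by
  rw [Tm_image_eq]
  exact MeasurableSet.iUnion fun k => homothety_image_meas hl (hA.inter (cube_meas s k))

lemma volume_Tm_image {s l : ℝ} (hs : 0 < s) (hl : 0 < l) (hl1 : l ≤ 1)
    {A : Set (EuclideanSpace ℝ (Fin n))} (hA : MeasurableSet A) :
    volume (Tm s l '' A) = ENNReal.ofReal (l ^ n) * volume A := by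
  have hsub : ∀ k : Fin n → ℤ,
      AffineMap.homothety (ctrk s k) l '' (A ∩ cube s k) ⊆ cube s k := by
    rintro k y ⟨x, ⟨_, hxk⟩, rfl⟩
    have := Tm_mem_cube hs hl hl1 hxk
    rwa [Tm_eq_on_cube hxk] at this
  have hmeask : ∀ k : Fin n → ℤ,
      MeasurableSet (AffineMap.homothety (ctrk s k) l '' (A ∩ cube s k)) :=
    fun k => homothety_image_meas hl.ne' (hA.inter (cube_meas s k))
  have hdisj : Pairwise (Function.onFun Disjoint
      (fun k : Fin n → ℤ => AffineMap.homothety (ctrk s k) l '' (A ∩ cube s k))) :=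
    fun k k' hkk' => (cube_disj s hkk').mono (hsub k) (hsub k')
  rw [Tm_image_eq, measure_iUnion hdisj hmeask]
  have him : ∀ k : Fin n → ℤ, volume (AffineMap.homothety (ctrk s k) l '' (A ∩ cube s k))
      = ENNReal.ofReal (l ^ n) * volume (A ∩ cube s k) := by
    intro k
    rw [Measure.addHaar_image_homothety, finrank_euclideanSpace_fin,
      abs_of_nonneg (pow_nonneg hl.le n)]
  simp_rw [him]
  rw [ENNReal.tsum_mul_left]
  congr 1
  have hcover : ⋃ k : Fin n → ℤ, cube s k = Set.univ :=
    Set.eq_univ_of_forall fun x => Set.mem_iUnion.2 ⟨_, mem_cube_self s x⟩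
  have hdisj2 : Pairwise (Function.onFun Disjoint (fun k : Fin n → ℤ => A ∩ cube s k)) :=
    fun k k' hkk' => (cube_disj s hkk').mono Set.inter_subset_right Set.inter_subset_right
  rw [← measure_iUnion hdisj2 (fun k => hA.inter (cube_meas s k)), ← Set.inter_iUnion,
    hcover, Set.inter_univ]

lemma dist_Tm_le {s l : ℝ} (hs : 0 < s) (hl : 0 < l) (hl1 : l ≤ 1)
    (x : EuclideanSpace ℝ (Fin n)) : dist x (Tm s l x) ≤ s * Real.sqrt n := by
  have hd : x - Tm s l x = (1 - l) • (x - ctr s x) := by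
    rw [Tm, sub_smul, one_smul]
    abel
  rw [dist_eq_norm, hd, norm_smul]
  have h1 : ‖(1 : ℝ) - l‖ ≤ 1 := by
    rw [Real.norm_eq_abs, abs_le]
    constructor <;> linarith
  have h2 : ‖x - ctr s x‖ ≤ s * Real.sqrt n := by
    rw [EuclideanSpace.norm_eq]
    have hbound : ∀ i, ‖(x - ctr s x) i‖ ^ 2 ≤ s ^ 2 := by
      intro i
      have hb := coord_bounds hs (mem_cube_self s x) i
      have : (x - ctr s x) i = x i - s * ((⌊x i / s⌋ : ℝ) + 1/2) := rfl
      rw [this, Real.norm_eq_abs, sq_abs]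
      nlinarith [hb.1, hb.2]
    calc Real.sqrt (∑ i, ‖(x - ctr s x) i‖ ^ 2)
        ≤ Real.sqrt (∑ _i : Fin n, s ^ 2) :=
          Real.sqrt_le_sqrt (Finset.sum_le_sum fun i _ => hbound i)
      _ = Real.sqrt ((n : ℝ) * s ^ 2) := by rw [Finset.sum_const, Finset.card_fin]; ring_nf
      _ = s * Real.sqrt n := by
          rw [Real.sqrt_mul (Nat.cast_nonneg n), Real.sqrt_sq hs.le]; ring
  calc ‖(1:ℝ) - l‖ * ‖x - ctr s x‖ ≤ 1 * (s * Real.sqrt n) := by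
        apply mul_le_mul h1 h2 (norm_nonneg _) zero_le_one
    _ = s * Real.sqrt n := one_mul _

lemma unif_apply {S A : Set (EuclideanSpace ℝ (Fin n))} (hA : MeasurableSet A) :
    unif S A = (volume S)⁻¹ * volume (A ∩ S) := by
  simp [unif, Measure.restrict_apply hA]

lemma unif_prob {S : Set (EuclideanSpace ℝ (Fin n))} (h0 : volume S ≠ 0) (hfin : volume S ≠ ∞) :
    IsProbabilityMeasure (unif S) := by
  constructor
  rw [unif_apply MeasurableSet.univ, Set.univ_inter]
  exact ENNReal.inv_mul_cancel h0 hfin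

lemma map_Tm_unif {s l : ℝ} (hs : 0 < s) (hl : 0 < l) (hl1 : l ≤ 1)
    {U : Set (EuclideanSpace ℝ (Fin n))} (hU : MeasurableSet U)
    (h0 : volume U ≠ 0) (hfin : volume U ≠ ∞) :
    (unif U).map (Tm s l) = unif (Tm s l '' U) := by
  have hT := measurable_Tm (n := n) s l
  have hl0 : ENNReal.ofReal (l ^ n) ≠ 0 := by
    rw [ne_eq, ENNReal.ofReal_eq_zero, not_le]
    positivity
  ext B hB
  have hLHS : (unif U).map (Tm s l) B = (volume U)⁻¹ * volume (U ∩ Tm s l ⁻¹' B) := by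
    rw [unif, Measure.map_smul, Measure.smul_apply, smul_eq_mul,
      Measure.map_apply hT hB, Measure.restrict_apply (hT hB), Set.inter_comm]
  rw [hLHS, unif_apply hB]
  have h1 : B ∩ Tm s l '' U = Tm s l '' (U ∩ Tm s l ⁻¹' B) := by
    rw [Set.image_inter_preimage, Set.inter_comm]
  rw [h1, volume_Tm_image hs hl hl1 (hU.inter (hT hB)), volume_Tm_image hs hl hl1 hU,
    ENNReal.mul_inv (Or.inl hl0) (Or.inl ENNReal.ofReal_ne_top), mul_mul_mul_comm,
    ENNReal.inv_mul_cancel hl0 ENNReal.ofReal_ne_top, one_mul]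

lemma W2_le_of_map {μ : Measure (EuclideanSpace ℝ (Fin n))} [IsProbabilityMeasure μ]
    {T : EuclideanSpace ℝ (Fin n) → EuclideanSpace ℝ (Fin n)} (hT : Measurable T)
    {C : ℝ} (hC : 0 ≤ C) (hd : ∀ x, dist x (T x) ≤ C) :
    W2 μ (μ.map T) ≤ ENNReal.ofReal C := by
  have hpair : Measurable fun x => (x, T x) := measurable_id.prodMk hT
  have hγ : μ.map (fun x => (x, T x)) ∈ couplings μ (μ.map T) := by
    constructor
    · rw [Measure.map_map measurable_fst hpair]
      exact Measure.map_id
    · rw [Measure.map_map measurable_snd hpair]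
      rfl
  refine le_trans (iInf₂_le _ hγ) ?_
  have hint : ∫⁻ w, edist w.1 w.2 ^ 2 ∂(μ.map fun x => (x, T x)) ≤ (ENNReal.ofReal C) ^ 2 := by
    rw [lintegral_map ((measurable_fst.edist measurable_snd).pow_const 2) hpair]
    calc ∫⁻ x, edist x (T x) ^ 2 ∂μ ≤ ∫⁻ _x, (ENNReal.ofReal C) ^ 2 ∂μ := by
          refine lintegral_mono fun x => ?_
          gcongr
          rw [edist_dist]
          exact ENNReal.ofReal_le_ofReal (hd x)
      _ = (ENNReal.ofReal C) ^ 2 := by simp [lintegral_const]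
  calc (∫⁻ w, edist w.1 w.2 ^ 2 ∂(μ.map fun x => (x, T x))) ^ (1/2 : ℝ)
      ≤ ((ENNReal.ofReal C) ^ 2) ^ (1/2 : ℝ) := ENNReal.rpow_le_rpow hint (by norm_num)
    _ = ENNReal.ofReal C := by
        rw [← ENNReal.rpow_natCast _ 2, ← ENNReal.rpow_mul]
        norm_num

/-- From `W2 μ ν = 0` for probability measures, `μ = ν`. -/
lemma eq_of_W2_eq_zero (μ ν : Measure (EuclideanSpace ℝ (Fin n)))
    [IsProbabilityMeasure μ] [IsProbabilityMeasure ν] (h : W2 μ ν = 0) : μ = ν := by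
  have hLP : levyProkhorovEDist μ ν = 0 := by
    refine le_antisymm ?_ zero_le
    refine levyProkhorovEDist_le_of_forall_le μ ν 0 ?_
    intro ε B hε hεtop hB
    have hcube : (0:ℝ≥0∞) < (ε^3) ^ (1/2:ℝ) :=
      ENNReal.rpow_pos (ENNReal.pow_pos hε 3) (ENNReal.pow_ne_top hεtop.ne)
    have h2 : W2 μ ν < (ε^3) ^ (1/2:ℝ) := h ▸ hcube
    rw [W2, iInf_lt_iff] at h2
    obtain ⟨γ, h3⟩ := h2
    rw [iInf_lt_iff] at h3
    obtain ⟨hγ, h4⟩ := h3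
    have hI : ∫⁻ w, edist w.1 w.2 ^ 2 ∂γ < ε^3 :=
      (ENNReal.rpow_lt_rpow_iff (by norm_num : (0:ℝ) < 1/2)).mp h4
    set t := ε.toReal with ht_def
    have hεt : ENNReal.ofReal t = ε := ENNReal.ofReal_toReal hεtop.ne
    have hsub : Prod.fst ⁻¹' B ⊆ (Prod.snd ⁻¹' thickening t B)
        ∪ {w : EuclideanSpace ℝ (Fin n) × EuclideanSpace ℝ (Fin n) | ε^2 ≤ edist w.1 w.2 ^ 2} := by
      intro w hw
      by_cases hd : ε ≤ edist w.1 w.2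
      · exact Or.inr (pow_le_pow_left' hd 2)
      · push_neg at hd
        left
        show w.2 ∈ thickening t B
        rw [Metric.mem_thickening_iff_infEdist_lt, hεt]
        exact lt_of_le_of_lt (EMetric.infEdist_le_edist_of_mem hw) (by rwa [edist_comm])
    have hμB : μ B = γ (Prod.fst ⁻¹' B) := by
      rw [← hγ.1, Measure.map_apply measurable_fst hB]
    have hνt : γ (Prod.snd ⁻¹' thickening t B) = ν (thickening t B) := by
      rw [← hγ.2, Measure.map_apply measurable_snd isOpen_thickening.measurableSet]
    have hmarkov : γ {w : EuclideanSpace ℝ (Fin n) × EuclideanSpace ℝ (Fin n)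
        | ε^2 ≤ edist w.1 w.2 ^ 2} ≤ ε := by
      have h5 := mul_meas_ge_le_lintegral₀ (μ := γ)
        ((measurable_fst.edist measurable_snd).pow_const 2).aemeasurable (ε^2)
      have h6 : ε^2 * γ {w : EuclideanSpace ℝ (Fin n) × EuclideanSpace ℝ (Fin n)
          | ε^2 ≤ edist w.1 w.2 ^ 2} < ε^2 * ε := lt_of_le_of_lt h5 (by rwa [← pow_succ])
      exact ((ENNReal.mul_lt_mul_iff_right (pow_ne_zero 2 hε.ne') (ENNReal.pow_ne_top hεtop.ne)).mp h6).le
    calc μ B = γ (Prod.fst ⁻¹' B) := hμB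
      _ ≤ γ (Prod.snd ⁻¹' thickening t B) + γ {w : EuclideanSpace ℝ (Fin n) ×
            EuclideanSpace ℝ (Fin n) | ε^2 ≤ edist w.1 w.2 ^ 2} :=
          le_trans (measure_mono hsub) (measure_union_le _ _)
      _ ≤ ν (thickening t B) + ε := by rw [hνt]; exact add_le_add_right hmarkov _
  apply ext_of_generate_finite _ ?_ isPiSystem_isClosed ?_ ?_
  · rw [BorelSpace.measurable_eq (α := EuclideanSpace ℝ (Fin n)), borel_eq_generateFrom_isClosed]
  · intro A hA
    exact measure_eq_measure_of_levyProkhorovEDist_eq_zero_of_isClosed hLP hA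
      ⟨1, one_pos, measure_ne_top _ _⟩ ⟨1, one_pos, measure_ne_top _ _⟩
  · simp

end W2aux

open W2aux

/-- **Below the volume of the ball the infimum is zero but not attained.**
Let `U = B(0, r_U)` and `0 < 𝒱 < vol(U)`. Then the infimum of `W₂(P_U, P_W)` over
measurable `W ⊆ ℝⁿ` with `vol(W) = 𝒱` is `0`, yet `W₂(P_U, P_W) > 0` for every such `W`. -/
theorem inf_W2_small_volume_not_attained (n : ℕ) (hn : 1 ≤ n) (rU : ℝ) (hrU : 0 < rU)
    (𝒱 : ℝ) (h𝒱pos : 0 < 𝒱)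
    (h𝒱 : ENNReal.ofReal 𝒱 < volume (ball (0 : EuclideanSpace ℝ (Fin n)) rU)) :
    (⨅ W ∈ {W : Set (EuclideanSpace ℝ (Fin n)) |
        MeasurableSet W ∧ volume W = ENNReal.ofReal 𝒱},
      W2 (unif (ball (0 : EuclideanSpace ℝ (Fin n)) rU)) (unif W)) = 0 ∧
    ∀ W : Set (EuclideanSpace ℝ (Fin n)), MeasurableSet W →
      volume W = ENNReal.ofReal 𝒱 →
        0 < W2 (unif (ball (0 : EuclideanSpace ℝ (Fin n)) rU)) (unif W) := by
  set U := ball (0 : EuclideanSpace ℝ (Fin n)) rU with hU_def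
  have hUmeas : MeasurableSet U := measurableSet_ball
  have hU0 : volume U ≠ 0 := (measure_ball_pos volume _ hrU).ne'
  have hUfin : volume U ≠ ∞ := measure_ball_lt_top.ne
  have hPU : IsProbabilityMeasure (unif U) := unif_prob hU0 hUfin
  set v : ℝ := (volume U).toReal with hv_def
  have hUv : volume U = ENNReal.ofReal v := (ENNReal.ofReal_toReal hUfin).symm
  have h𝒱v : 𝒱 < v := by
    rw [hUv] at h𝒱
    exact (ENNReal.ofReal_lt_ofReal_iff_of_nonneg h𝒱pos.le).mp h𝒱
  have hv : 0 < v := lt_trans h𝒱pos h𝒱v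
  set l : ℝ := (𝒱 / v) ^ ((n : ℝ)⁻¹) with hl_def
  have hdiv : 0 < 𝒱 / v := div_pos h𝒱pos hv
  have hdiv1 : 𝒱 / v < 1 := (div_lt_one hv).mpr h𝒱v
  have hl : 0 < l := Real.rpow_pos_of_pos hdiv _
  have hl1 : l ≤ 1 := Real.rpow_le_one hdiv.le hdiv1.le (by positivity)
  have hln : l ^ n = 𝒱 / v := by
    rw [hl_def, ← Real.rpow_natCast (_ ^ _) n, ← Real.rpow_mul hdiv.le,
      inv_mul_cancel₀ (by exact_mod_cast Nat.one_le_iff_ne_zero.mp hn : (n:ℝ) ≠ 0),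
      Real.rpow_one]
  constructor
  · refine le_antisymm ?_ zero_le
    refine ENNReal.le_of_forall_pos_le_add fun ε hε _ => ?_
    rw [zero_add]
    set s : ℝ := (ε : ℝ) / (Real.sqrt n + 1) with hs_def
    have hsqn : (0:ℝ) ≤ Real.sqrt n := Real.sqrt_nonneg _
    have hs : 0 < s := div_pos (by exact_mod_cast hε) (by linarith)
    set W := Tm s l '' U with hW_def
    have hWmeas : MeasurableSet W := meas_Tm_image hl.ne' hUmeas
    have hWvol : volume W = ENNReal.ofReal 𝒱 := by
      rw [hW_def, volume_Tm_image hs hl hl1 hUmeas, hln, hUv,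
        ← ENNReal.ofReal_mul (by positivity), div_mul_cancel₀ _ hv.ne']
    refine le_trans (iInf₂_le W ⟨hWmeas, hWvol⟩) ?_
    have hmap : unif W = (unif U).map (Tm s l) :=
      (map_Tm_unif hs hl hl1 hUmeas hU0 hUfin).symm
    rw [hmap]
    refine le_trans (W2_le_of_map (measurable_Tm s l) (by positivity)
      (dist_Tm_le hs hl hl1)) ?_
    have hsn : s * Real.sqrt n ≤ (ε : ℝ) := by
      have hεr : (0:ℝ) ≤ (ε : ℝ) := ε.coe_nonneg
      rw [hs_def, div_mul_eq_mul_div, div_le_iff₀ (by linarith)]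
      nlinarith
    calc ENNReal.ofReal (s * Real.sqrt n) ≤ ENNReal.ofReal (ε : ℝ) :=
          ENNReal.ofReal_le_ofReal hsn
      _ = (ε : ℝ≥0∞) := ENNReal.ofReal_coe_nnreal
  · intro W hW hvol
    rw [pos_iff_ne_zero]
    intro h0
    have hW0 : volume W ≠ 0 := by rw [hvol]; simpa using h𝒱pos
    have hWfin : volume W ≠ ∞ := by rw [hvol]; exact ENNReal.ofReal_ne_top
    have hPW : IsProbabilityMeasure (unif W) := unif_prob hW0 hWfin
    have heq : unif U = unif W := eq_of_W2_eq_zero _ _ h0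
    have h𝒱0 : ENNReal.ofReal 𝒱 ≠ 0 := by simpa using h𝒱pos
    -- evaluate at U : get volume (U ∩ W) = ofReal 𝒱
    have e1 : (1 : ℝ≥0∞) = (ENNReal.ofReal 𝒱)⁻¹ * volume (U ∩ W) := by
      have := congrArg (fun m : Measure (EuclideanSpace ℝ (Fin n)) => m U) heq
      simp only [unif_apply hUmeas, Set.inter_self, hvol] at this
      rwa [ENNReal.inv_mul_cancel hU0 hUfin] at this
    have hm : volume (U ∩ W) = ENNReal.ofReal 𝒱 := by
      have := congrArg (fun z => ENNReal.ofReal 𝒱 * z) e1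
      simp only [mul_one, ← mul_assoc] at this
      rw [ENNReal.mul_inv_cancel h𝒱0 ENNReal.ofReal_ne_top, one_mul] at this
      exact this.symm
    -- evaluate at W ∩ U
    have hAmeas : MeasurableSet (W ∩ U) := hW.inter hUmeas
    have e2 : (volume U)⁻¹ * volume (W ∩ U ∩ U) = (ENNReal.ofReal 𝒱)⁻¹ * volume (W ∩ U ∩ W) := by
      have := congrArg (fun m : Measure (EuclideanSpace ℝ (Fin n)) => m (W ∩ U)) heq
      simpa only [unif_apply hAmeas, hvol] using this
    have hWU1 : W ∩ U ∩ U = W ∩ U := by rw [Set.inter_assoc, Set.inter_self]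
    have hWU2 : W ∩ U ∩ W = W ∩ U := by
      rw [Set.inter_comm W U, Set.inter_assoc, Set.inter_self, Set.inter_comm]
    rw [hWU1, hWU2, Set.inter_comm W U, hm,
      ENNReal.inv_mul_cancel h𝒱0 ENNReal.ofReal_ne_top] at e2
    -- e2 : (volume U)⁻¹ * ofReal 𝒱 = 1, so volume U = ofReal 𝒱, contradicting h𝒱
    have : volume U = ENNReal.ofReal 𝒱 := by
      have h3 := congrArg (fun z => volume U * z) e2
      simp only [mul_one, ← mul_assoc] at h3
      rw [ENNReal.mul_inv_cancel hU0 hUfin, one_mul] at h3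
      exact h3.symm
    rw [this] at h𝒱
    exact lt_irrefl _ h𝒱

end
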